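/- For a generic tuple of matrices (A_1, ..., A_d) ∈ F^{n_1×r} × ... × F^{n_d×r} (i.e., for all tuples outside a proper Zariski-closed subset), for every nonempty subset h ⊆ {1,...,d} the Khatri–Rao product A_{h_1} ⊙ A_{h_2} ⊙ ... ⊙ A_{h_k} has the maximal possible rank min{r, ∏_{i∈h} n_i}. -/
import Mathlib

open MvPolynomial Matrix

private lemma rank_submatrix_le_gen {K : Type*} [Field K] {R C : Type*} [Fintype R] [Fintype C]
    [DecidableEq R] [DecidableEq C] {k : ℕ} (B : Matrix R C K) (ρ : Fin k → R) (κ : Fin k → C) :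
    (B.submatrix ρ κ).rank ≤ B.rank := by
  have h1 : ((1 : Matrix R R K).submatrix ρ (Equiv.refl R)) * B = B.submatrix ρ id := by
    simpa using Matrix.one_submatrix_mul ρ (Equiv.refl R) B
  have h2 : (B.submatrix ρ id) * ((1 : Matrix C C K).submatrix (Equiv.refl C) κ)
      = B.submatrix ρ κ := by
    simpa using Matrix.mul_submatrix_one (Equiv.refl C) κ (B.submatrix ρ id)
  calc (B.submatrix ρ κ).rank
      = ((((1 : Matrix R R K).submatrix ρ (Equiv.refl R)) * B)
          * ((1 : Matrix C C K).submatrix (Equiv.refl C) κ)).rank := by rw [h1, h2]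
    _ ≤ (((1 : Matrix R R K).submatrix ρ (Equiv.refl R)) * B).rank :=
        Matrix.rank_mul_le_left _ _
    _ ≤ B.rank := Matrix.rank_mul_le_right _ _

private lemma khatriRao_key (F : Type*) [RCLike F] (d r : ℕ) (n : Fin d → ℕ)
    (h : Finset (Fin d)) :
    ∃ P : MvPolynomial ((i : Fin d) × (Fin (n i) × Fin r)) F, P ≠ 0 ∧
      ∀ A : (i : Fin d) → Matrix (Fin (n i)) (Fin r) F,
        MvPolynomial.eval (fun x => A x.1 x.2.1 x.2.2) P ≠ 0 →
          (Matrix.of fun (f : (i : {x // x ∈ h}) → Fin (n i.1)) (j : Fin r) =>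
              ∏ i : {x // x ∈ h}, A i.1 (f i) j).rank
            = min r (∏ i ∈ h, n i) := by
  classical
  set m := h.card with hm
  let σ : Fin m ≃o {x // x ∈ h} := h.orderIsoOfFin rfl
  let ν : Fin m → ℕ := fun t => n (σ t).1
  set N : ℕ := ∏ t, ν t with hNdef
  have hN : N = ∏ i ∈ h, n i := by
    rw [← Finset.prod_coe_sort h n]
    exact Fintype.prod_equiv σ.toEquiv _ _ (fun t => rfl)
  let I := (i : {x // x ∈ h}) → Fin (n i.1)
  let E : I ≃ Fin N :=
    (Equiv.piCongrLeft' (fun i => Fin (n i.1)) σ.toEquiv.symm).trans finPiFinEquiv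
  set k : ℕ := min r N with hk
  have hkr : k ≤ r := min_le_left _ _
  have hkN : k ≤ N := min_le_right _ _
  let ρ : Fin k → I := fun a => E.symm (Fin.castLE hkN a)
  let κ : Fin k → Fin r := Fin.castLE hkr
  let Mp : Matrix I (Fin r) (MvPolynomial ((i : Fin d) × (Fin (n i) × Fin r)) F) :=
    Matrix.of fun f j => ∏ i : {x // x ∈ h}, MvPolynomial.X ⟨i.1, (f i, j)⟩
  refine ⟨(Mp.submatrix ρ κ).det, ?_, ?_⟩
  · -- nonzero: evaluate at a Vandermonde-type witness
    let w : Fin m → ℕ := fun t => ∏ j : Fin t, ν (Fin.castLE t.is_lt.le j)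
    let W : (i : Fin d) → Matrix (Fin (n i)) (Fin r) F := fun i =>
      Matrix.of fun p j =>
        if hi : i ∈ h then (((j : ℕ) : F) + 1) ^ ((p : ℕ) * w (σ.symm ⟨i, hi⟩)) else 1
    intro hP0
    have hev : MvPolynomial.eval (fun x => W x.1 x.2.1 x.2.2) (Mp.submatrix ρ κ).det = 0 := by
      rw [hP0, map_zero]
    rw [RingHom.map_det, RingHom.mapMatrix_apply] at hev
    have hmat : ((Mp.submatrix ρ κ).map (MvPolynomial.eval (fun x => W x.1 x.2.1 x.2.2)))
        = (Matrix.vandermonde (fun b : Fin k => ((b : ℕ) : F) + 1))ᵀ := by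
      ext a b
      have h1 : ∀ (f : I) (j : Fin r),
          MvPolynomial.eval (fun x => W x.1 x.2.1 x.2.2) (Mp f j)
            = (((j : ℕ) : F) + 1) ^ ((E f : ℕ)) := by
        intro f j
        have : MvPolynomial.eval (fun x => W x.1 x.2.1 x.2.2) (Mp f j)
            = ∏ i : {x // x ∈ h}, W i.1 (f i) j := by
          simp [Mp]
        rw [this]
        have h2 : ∀ i : {x // x ∈ h},
            W i.1 (f i) j = (((j : ℕ) : F) + 1) ^ ((f i : ℕ) * w (σ.symm i)) := by
          intro i
          simp only [W, Matrix.of_apply, dif_pos i.2]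
        simp_rw [h2]
        rw [Finset.prod_pow_eq_pow_sum]
        congr 1
        have : (E f : ℕ) = ∑ t : Fin m, ((f (σ t) : ℕ) * w t) := by
          simp only [E, Equiv.trans_apply, finPiFinEquiv_apply]
          rfl
        rw [this]
        exact (Fintype.sum_equiv σ.toEquiv _ _ (fun t => by simp)).symm
      simp only [Matrix.map_apply, Matrix.submatrix_apply]
      rw [h1]
      have hEρ : (E (ρ a) : ℕ) = (a : ℕ) := by simp [ρ]
      simp [κ, hEρ, Matrix.transpose_apply, Matrix.vandermonde]
    rw [hmat, Matrix.det_transpose, Matrix.det_vandermonde] at hev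
    have : ∀ i : Fin k, ∀ j ∈ Finset.Ioi i,
        (((j : ℕ) : F) + 1) - (((i : ℕ) : F) + 1) ≠ 0 := by
      intro i j hj
      rw [Finset.mem_Ioi] at hj
      have : ((j : ℕ) : F) ≠ ((i : ℕ) : F) := by
        rw [Ne, Nat.cast_inj]
        exact fun hc => absurd (Fin.val_injective hc ▸ hj) (lt_irrefl _)
      intro hc
      apply this
      linear_combination hc
    exact absurd hev (Finset.prod_ne_zero_iff.mpr fun i _ =>
      Finset.prod_ne_zero_iff.mpr fun j hj => this i j hj)
  · intro A hA
    set KR : Matrix I (Fin r) F :=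
      Matrix.of fun (f : (i : {x // x ∈ h}) → Fin (n i.1)) (j : Fin r) =>
        ∏ i : {x // x ∈ h}, A i.1 (f i) j with hKR
    have hmap : (Mp.submatrix ρ κ).map (MvPolynomial.eval (fun x => A x.1 x.2.1 x.2.2))
        = KR.submatrix ρ κ := by
      ext a b
      simp [Mp, KR]
    have hdet : (KR.submatrix ρ κ).det ≠ 0 := by
      rw [← hmap, ← RingHom.mapMatrix_apply, ← RingHom.map_det]
      exact hA
    have hcardI : Fintype.card I = N := by
      rw [hN, ← Finset.prod_coe_sort h n]
      simp [I, Fintype.card_pi]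
    rw [← hN, ← hk]
    refine le_antisymm (le_min ?_ ?_) ?_
    · exact (Matrix.rank_le_card_width KR).trans (by simp)
    · exact (Matrix.rank_le_card_height KR).trans (by rw [hcardI])
    · have h1 : (KR.submatrix ρ κ).rank = k := by
        rw [Matrix.rank_of_isUnit _ ((Matrix.isUnit_iff_isUnit_det _).mpr
          (isUnit_iff_ne_zero.mpr hdet)), Fintype.card_fin]
      calc k = (KR.submatrix ρ κ).rank := h1.symm
        _ ≤ KR.rank := rank_submatrix_le_gen KR ρ κ

theorem generic_khatriRao_max_rank (F : Type*) [RCLike F] (d r : ℕ) (n : Fin d → ℕ) :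
    ∃ P : MvPolynomial ((i : Fin d) × (Fin (n i) × Fin r)) F, P ≠ 0 ∧
      ∀ A : (i : Fin d) → Matrix (Fin (n i)) (Fin r) F,
        MvPolynomial.eval (fun x => A x.1 x.2.1 x.2.2) P ≠ 0 →
        ∀ h : Finset (Fin d), h.Nonempty →
          (Matrix.of fun (f : (i : {x // x ∈ h}) → Fin (n i.1)) (j : Fin r) =>
              ∏ i : {x // x ∈ h}, A i.1 (f i) j).rank
            = min r (∏ i ∈ h, n i) := by
  classical
  choose Q hQ0 hQ using khatriRao_key F d r n
  refine ⟨∏ h : Finset (Fin d), Q h, ?_, ?_⟩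
  · exact Finset.prod_ne_zero_iff.mpr fun h _ => hQ0 h
  · intro A hA h _
    apply hQ h A
    intro hc
    apply hA
    rw [map_prod]
    exact Finset.prod_eq_zero (Finset.mem_univ h) hc
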